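/- arXiv:1910.13297 — 7 statements merged into one kernel-verified Lean document; each statement's English description precedes it below -/
import Mathlib

section
/- Let G be a connected graph with edge weights w, let T be a minimum-weight spanning tree of G, and let T' be any spanning tree of G. Then there exists an exchange bijection φ : E(T) → E(T') (i.e., for each e ∈ E(T), T − e + φ(e) is a spanning tree) such that w(e) ≤ w(φ(e)) for all e ∈ E(T). -/
open Finset

/-- Connectivity of the multigraph with vertex set `V` using only the edges in `S`. -/
def EdgeConn {V E : Type*} (ends : E → Sym2 V) (S : Set E) : Prop :=
  ∀ a b : V, Relation.ReflTransGen (fun x y => ∃ e ∈ S, ends e = s(x, y)) a b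

/-- `T` is a spanning tree: its edges connect all of `V` and every edge is a bridge. -/
def IsSpanningTree {V E : Type*} [DecidableEq E] (ends : E → Sym2 V) (T : Finset E) : Prop :=
  EdgeConn ends ↑T ∧ ∀ e ∈ T, ¬ EdgeConn ends ↑(T.erase e)

set_option linter.unusedSectionVars false
set_option linter.unusedVariables false
namespace MSTAux

variable {V E : Type*} [DecidableEq E] (ends : E → Sym2 V)

def Conn (S : Finset E) (x y : V) : Prop :=
  Relation.ReflTransGen (fun p q => ∃ e ∈ S, ends e = s(p, q)) x y

lemma edgeConn_iff {S : Finset E} : EdgeConn ends ↑S ↔ ∀ x y, Conn ends S x y := Iff.rfl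

variable {ends}

lemma conn_symm {S : Finset E} {x y : V} (h : Conn ends S x y) : Conn ends S y x := by
  refine (@Relation.ReflTransGen.stdSymm _ _ ⟨?_⟩).symm _ _ h
  rintro p q ⟨e, he, hh⟩
  exact ⟨e, he, hh.trans Sym2.eq_swap⟩

lemma conn_mono {S S' : Finset E} (hss : S ⊆ S') {x y : V} (h : Conn ends S x y) :
    Conn ends S' x y :=
  Relation.ReflTransGen.mono (p := fun p q => ∃ e ∈ S', ends e = s(p, q))
    (fun p q ⟨e, he, hh⟩ => ⟨e, hss he, hh⟩) _ _ h

lemma conn_split {S : Finset E} {e : E} {a b x y : V} (hab : ends e = s(a, b))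
    (h : Conn ends (insert e S) x y) :
    Conn ends S x y ∨ (Conn ends S x a ∧ Conn ends S b y) ∨
      (Conn ends S x b ∧ Conn ends S a y) := by
  induction h with
  | refl => exact Or.inl .refl
  | @tail z y hxz hzy ih =>
    obtain ⟨g, hg, hends⟩ := hzy
    rcases Finset.mem_insert.mp hg with rfl | hgS
    · rw [hab] at hends
      rcases Sym2.eq_iff.mp hends.symm with ⟨rfl, rfl⟩ | ⟨rfl, rfl⟩
      · rcases ih with h1 | ⟨h1, h2⟩ | ⟨h1, h2⟩
        · exact Or.inr (Or.inl ⟨h1, .refl⟩)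
        · exact Or.inr (Or.inl ⟨h1, .refl⟩)
        · exact Or.inl h1
      · rcases ih with h1 | ⟨h1, h2⟩ | ⟨h1, h2⟩
        · exact Or.inr (Or.inr ⟨h1, .refl⟩)
        · exact Or.inl h1
        · exact Or.inr (Or.inr ⟨h1, .refl⟩)
    · have hz : Conn ends S z y := Relation.ReflTransGen.single ⟨g, hgS, hends⟩
      rcases ih with h1 | ⟨h1, h2⟩ | ⟨h1, h2⟩
      · exact Or.inl (h1.trans hz)
      · exact Or.inr (Or.inl ⟨h1, h2.trans hz⟩)
      · exact Or.inr (Or.inr ⟨h1, h2.trans hz⟩)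

lemma conn_replace {A B : Finset E} (h : ∀ p q, (∃ e ∈ A, ends e = s(p, q)) → Conn ends B p q)
    {x y : V} (hxy : Conn ends A x y) : Conn ends B x y := by
  induction hxy with
  | refl => exact .refl
  | tail _ hstep ih => exact ih.trans (h _ _ hstep)

lemma sym2_cases (z : Sym2 V) : ∃ a b, z = s(a, b) :=
  z.inductionOn (fun a b => ⟨a, b, rfl⟩)

end MSTAux

namespace MSTAux
variable {V E : Type*} [DecidableEq E] {ends : E → Sym2 V}

lemma tree_cut {T : Finset E} (hT : IsSpanningTree ends T)
    {e : E} (he : e ∈ T) {a b : V} (hab : ends e = s(a, b)) :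
    ¬ Conn ends (T.erase e) a b := by
  intro hcon
  refine hT.2 e he ?_
  rw [edgeConn_iff]
  intro x y
  have hxy : Conn ends T x y := (edgeConn_iff ends).mp hT.1 x y
  rw [← Finset.insert_erase he] at hxy
  rcases conn_split hab hxy with h | ⟨h1, h2⟩ | ⟨h1, h2⟩
  · exact h
  · exact h1.trans (hcon.trans h2)
  · exact h1.trans ((conn_symm hcon).trans h2)

variable (ends) in
def connSetoid (S : Finset E) : Setoid V :=
  ⟨Conn ends S, ⟨fun _ => .refl, conn_symm, Relation.ReflTransGen.trans⟩⟩

variable (ends) in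
noncomputable def cc (S : Finset E) : ℕ := Nat.card (Quotient (connSetoid ends S))

variable [Fintype V]

lemma conn_empty {x y : V} (h : Conn ends (∅ : Finset E) x y) : x = y := by
  induction h with
  | refl => rfl
  | tail _ h ih => obtain ⟨g, hg, -⟩ := h; simp at hg

lemma cc_empty : cc ends (∅ : Finset E) = Fintype.card V := by
  have hbij : Function.Bijective (Quotient.mk (connSetoid ends (∅ : Finset E))) :=
    ⟨fun x y h => conn_empty (Quotient.exact h), Quotient.exists_rep⟩
  rw [cc, ← Nat.card_eq_fintype_card]
  exact (Nat.card_eq_of_bijective _ hbij).symm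

lemma cc_le_insert (S : Finset E) (e : E) : cc ends S ≤ cc ends (insert e S) + 1 := by
  classical
  obtain ⟨a, b, hab⟩ := sym2_cases (ends e)
  set s1 := connSetoid ends S with hs1
  set s2 := connSetoid ends (insert e S) with hs2
  let φ : Quotient s1 → Quotient s2 :=
    Quotient.lift (fun v => Quotient.mk s2 v)
      (fun p q hpq => Quotient.sound (conn_mono (Finset.subset_insert e S) hpq))
  let g : Quotient s1 → Quotient s2 ⊕ Unit :=
    fun x => if x = Quotient.mk s1 a then Sum.inr () else Sum.inl (φ x)
  have hg : Function.Injective g := by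
    intro x y hxy
    simp only [g] at hxy
    by_cases hx : x = Quotient.mk s1 a <;> by_cases hy : y = Quotient.mk s1 a
    · exact hx.trans hy.symm
    · rw [if_pos hx, if_neg hy] at hxy; exact absurd hxy (by simp)
    · rw [if_neg hx, if_pos hy] at hxy; exact absurd hxy (by simp)
    · rw [if_neg hx, if_neg hy] at hxy
      obtain ⟨p, rfl⟩ := Quotient.exists_rep x
      obtain ⟨q, rfl⟩ := Quotient.exists_rep y
      have hpq : Conn ends (insert e S) p q := Quotient.exact (Sum.inl.inj hxy)
      rcases conn_split hab hpq with h | ⟨h1, h2⟩ | ⟨h1, h2⟩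
      · exact Quotient.sound h
      · exact absurd (Quotient.sound h1) hx
      · exact absurd (Quotient.sound (conn_symm h2)) hy
  have h1 : Nat.card Unit = 1 := Nat.card_unique
  calc cc ends S ≤ Nat.card (Quotient s2 ⊕ Unit) := Nat.card_le_card_of_injective g hg
    _ = cc ends (insert e S) + 1 := by rw [Nat.card_sum, h1]; rfl

lemma cc_erase {S : Finset E} {e : E} (he : e ∈ S) {a b : V} (hab : ends e = s(a, b))
    (hnc : ¬ Conn ends (S.erase e) a b) : cc ends S + 1 ≤ cc ends (S.erase e) := by
  classical
  set s1 := connSetoid ends (S.erase e) with hs1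
  set s2 := connSetoid ends S with hs2
  let φ : Quotient s1 → Quotient s2 :=
    Quotient.lift (fun v => Quotient.mk s2 v)
      (fun p q hpq => Quotient.sound (conn_mono (Finset.erase_subset e S) hpq))
  have hφsurj : Function.Surjective φ := by
    intro z; obtain ⟨p, rfl⟩ := Quotient.exists_rep z; exact ⟨Quotient.mk s1 p, rfl⟩
  set sec := Function.surjInv hφsurj with hsec
  have hsecinj : Function.Injective sec := Function.injective_surjInv hφsurj
  have hab2 : φ (Quotient.mk s1 a) = φ (Quotient.mk s1 b) :=
    Quotient.sound (Relation.ReflTransGen.single ⟨e, he, hab⟩)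
  have habne : Quotient.mk s1 a ≠ Quotient.mk s1 b := fun h => hnc (Quotient.exact h)
  set t : Quotient s1 := if sec (φ (Quotient.mk s1 a)) = Quotient.mk s1 a
    then Quotient.mk s1 b else Quotient.mk s1 a with hht
  have ht : ∀ z, sec z ≠ t := by
    intro z hz
    have hφt : φ t = φ (Quotient.mk s1 a) := by
      by_cases hc : sec (φ (Quotient.mk s1 a)) = Quotient.mk s1 a
      · rw [hht, if_pos hc]; exact hab2.symm
      · rw [hht, if_neg hc]
    have hz2 : z = φ (Quotient.mk s1 a) := by
      rw [← hφt, ← hz, Function.surjInv_eq hφsurj]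
    have hts : t = sec (φ (Quotient.mk s1 a)) := by rw [← hz2, hz]
    by_cases hc : sec (φ (Quotient.mk s1 a)) = Quotient.mk s1 a
    · have h1 : t = Quotient.mk s1 b := by rw [hht, if_pos hc]
      have h2 : t = Quotient.mk s1 a := hts.trans hc
      exact habne (h2.symm.trans h1)
    · have h1 : t = Quotient.mk s1 a := by rw [hht, if_neg hc]
      exact hc (hts.symm.trans h1)
  let g : Quotient s2 ⊕ Unit → Quotient s1 := fun x => Sum.elim sec (fun _ => t) x
  have hg : Function.Injective g := by
    rintro (z1 | u1) (z2 | u2) h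
    · simp only [g, Sum.elim_inl] at h; rw [hsecinj h]
    · exact absurd h (ht z1)
    · exact absurd h.symm (ht z2)
    · rfl
  have h1 : Nat.card Unit = 1 := Nat.card_unique
  calc cc ends S + 1 = Nat.card (Quotient s2 ⊕ Unit) := by rw [Nat.card_sum, h1]; rfl
    _ ≤ cc ends (S.erase e) := Nat.card_le_card_of_injective g hg

lemma cc_eq_one [Nonempty V] {S : Finset E} (h : ∀ x y, Conn ends S x y) : cc ends S = 1 := by
  haveI : Subsingleton (Quotient (connSetoid ends S)) := by
    constructor
    intro x y
    obtain ⟨p, rfl⟩ := Quotient.exists_rep x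
    obtain ⟨q, rfl⟩ := Quotient.exists_rep y
    exact Quotient.sound (h p q)
  haveI : Nonempty (Quotient (connSetoid ends S)) :=
    ⟨Quotient.mk _ (Classical.arbitrary V)⟩
  exact Nat.card_unique

end MSTAux

namespace MSTAux
variable {V E : Type*} [DecidableEq E] {ends : E → Sym2 V} [Fintype V]

lemma card_V_le (S : Finset E) : Fintype.card V ≤ cc ends S + S.card := by
  classical
  induction S using Finset.induction_on with
  | empty => simp [cc_empty]
  | @insert e S he ih =>
    calc Fintype.card V ≤ cc ends S + S.card := ih
      _ ≤ (cc ends (insert e S) + 1) + S.card := by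
          exact Nat.add_le_add_right (cc_le_insert S e) _
      _ = cc ends (insert e S) + (insert e S).card := by
          rw [Finset.card_insert_of_notMem he]; ring

lemma subset_tree_card {T : Finset E}
    (hT : IsSpanningTree ends T) (S : Finset E) :
    S ⊆ T → cc ends S + S.card ≤ Fintype.card V := by
  classical
  induction S using Finset.induction_on with
  | empty => intro _; simp [cc_empty]
  | @insert e S he ih =>
    intro hsub
    have heT : e ∈ T := hsub (Finset.mem_insert_self e S)
    have hST : S ⊆ T := (Finset.subset_insert e S).trans hsub
    obtain ⟨a, b, hab⟩ := sym2_cases (ends e)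
    have hSTe : S ⊆ T.erase e := fun x hx =>
      Finset.mem_erase.mpr ⟨fun h => he (h ▸ hx), hST hx⟩
    have hnc : ¬ Conn ends S a b := fun h => tree_cut hT heT hab (conn_mono hSTe h)
    have hnc' : ¬ Conn ends ((insert e S).erase e) a b := by
      rwa [Finset.erase_insert he]
    have hkey := cc_erase (Finset.mem_insert_self e S) hab hnc'
    rw [Finset.erase_insert he] at hkey
    calc cc ends (insert e S) + (insert e S).card
        = (cc ends (insert e S) + 1) + S.card := by
          rw [Finset.card_insert_of_notMem he]; ring
      _ ≤ cc ends S + S.card := Nat.add_le_add_right hkey _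
      _ ≤ Fintype.card V := ih hST

lemma tree_card [Nonempty V] {T : Finset E}
    (hT : IsSpanningTree ends T) :
    T.card + 1 = Fintype.card V := by
  have h1 := subset_tree_card hT T (Finset.Subset.refl T)
  have h2 := card_V_le (ends := ends) T
  have hc : cc ends T = 1 := cc_eq_one ((edgeConn_iff ends).mp hT.1)
  omega

lemma tree_of_conn_card [Nonempty V] {S : Finset E} (hconn : ∀ x y, Conn ends S x y)
    (hcard : S.card + 1 = Fintype.card V) :
    IsSpanningTree ends S := by
  refine ⟨(edgeConn_iff ends).mpr hconn, ?_⟩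
  intro g hg hEC
  have h := card_V_le (ends := ends) (S.erase g)
  have hc : cc ends (S.erase g) = 1 := cc_eq_one ((edgeConn_iff ends).mp hEC)
  have h2 : (S.erase g).card = S.card - 1 := Finset.card_erase_of_mem hg
  have h3 : 1 ≤ S.card := Finset.card_pos.mpr ⟨g, hg⟩
  omega

lemma exchange_tree {T : Finset E}
    (hT : IsSpanningTree ends T)
    {e f : E} (he : e ∈ T) {c d : V} (hcd : ends f = s(c, d))
    (hcross : ¬ Conn ends (T.erase e) c d) :
    f ∉ T.erase e ∧ IsSpanningTree ends (insert f (T.erase e)) := by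
  classical
  obtain ⟨a, b, hab⟩ := sym2_cases (ends e)
  haveI : Nonempty V := ⟨a⟩
  have hconnT : ∀ x y, Conn ends T x y := (edgeConn_iff ends).mp hT.1
  have hfT : f ∉ T.erase e := fun hf => hcross (Relation.ReflTransGen.single ⟨f, hf, hcd⟩)
  refine ⟨hfT, ?_⟩
  have dich : ∀ x : V, Conn ends (T.erase e) x a ∨ Conn ends (T.erase e) x b := by
    intro x
    have hx : Conn ends T x a := hconnT x a
    rw [← Finset.insert_erase he] at hx
    rcases conn_split hab hx with h | ⟨h1, _⟩ | ⟨h1, _⟩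
    · exact Or.inl h
    · exact Or.inl h1
    · exact Or.inr h1
  set T2 := insert f (T.erase e) with hT2
  have hfstep : Conn ends T2 c d :=
    Relation.ReflTransGen.single ⟨f, Finset.mem_insert_self f _, hcd⟩
  have hsub2 : T.erase e ⊆ T2 := Finset.subset_insert f _
  -- WLOG structure: show all vertices connect to c in T2
  have hcase : (Conn ends (T.erase e) c a ∧ Conn ends (T.erase e) d b) ∨
      (Conn ends (T.erase e) c b ∧ Conn ends (T.erase e) d a) := by
    rcases dich c with h1 | h1 <;> rcases dich d with h2 | h2
    · exact absurd (h1.trans (conn_symm h2)) hcross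
    · exact Or.inl ⟨h1, h2⟩
    · exact Or.inr ⟨h1, h2⟩
    · exact absurd (h1.trans (conn_symm h2)) hcross
  have hallc : ∀ x : V, Conn ends T2 x c := by
    intro x
    rcases hcase with ⟨hca, hdb⟩ | ⟨hcb, hda⟩
    · rcases dich x with hx | hx
      · exact conn_mono hsub2 (hx.trans (conn_symm hca))
      · exact (conn_mono hsub2 (hx.trans (conn_symm hdb))).trans (conn_symm hfstep)
    · rcases dich x with hx | hx
      · exact (conn_mono hsub2 (hx.trans (conn_symm hda))).trans (conn_symm hfstep)
      · exact conn_mono hsub2 (hx.trans (conn_symm hcb))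
  have hconn2 : ∀ x y, Conn ends T2 x y := fun x y => (hallc x).trans (conn_symm (hallc y))
  have hcard2 : T2.card = T.card := by
    rw [hT2, Finset.card_insert_of_notMem hfT, Finset.card_erase_of_mem he]
    have : 1 ≤ T.card := Finset.card_pos.mpr ⟨e, he⟩
    omega
  have htc := tree_card hT
  exact tree_of_conn_card hconn2 (by omega)

lemma conn_sdiff {T : Finset E}
    (hT : IsSpanningTree ends T)
    {c d : V} (X : Finset E) :
    X ⊆ T → (∀ e ∈ X, Conn ends (T.erase e) c d) → Conn ends (T \ X) c d := by
  classical
  induction X using Finset.induction_on with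
  | empty =>
    intro _ _
    have := (edgeConn_iff ends).mp hT.1 c d
    simpa using conn_mono (by simp) this
  | @insert e X he ih =>
    intro hX hall
    have heT : e ∈ T := hX (Finset.mem_insert_self e X)
    have h1 : Conn ends (T \ X) c d :=
      ih ((Finset.subset_insert e X).trans hX) (fun g hg => hall g (Finset.mem_insert_of_mem hg))
    have h2 : Conn ends (T.erase e) c d := hall e (Finset.mem_insert_self e X)
    obtain ⟨a, b, hab⟩ := sym2_cases (ends e)
    have heTX : e ∈ T \ X := Finset.mem_sdiff.mpr ⟨heT, he⟩
    rw [← Finset.insert_erase heTX] at h1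
    have hsub : (T \ X).erase e ⊆ T.erase e :=
      Finset.erase_subset_erase e (Finset.sdiff_subset)
    have hTXi : T \ insert e X = (T \ X).erase e := by
      ext x; simp only [Finset.mem_sdiff, Finset.mem_erase, Finset.mem_insert]; tauto
    rcases conn_split hab h1 with h | ⟨hca, hbd⟩ | ⟨hcb, had⟩
    · rwa [hTXi]
    · exfalso
      refine tree_cut hT heT hab ?_
      exact ((conn_symm (conn_mono hsub hca)).trans h2).trans (conn_symm (conn_mono hsub hbd))
    · exfalso
      refine tree_cut hT heT hab ?_
      exact (conn_mono hsub had).trans ((conn_symm h2).trans (conn_mono hsub hcb))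

end MSTAux

open MSTAux

/-- **Monotone exchange bijections.** If `T` is a minimum-weight spanning tree of a connected
graph `G` and `T'` is any spanning tree of `G`, then there is an exchange bijection
`φ : E(T) → E(T')` (for each `e ∈ E(T)`, `T - e + φ(e)` is a spanning tree) with
`w e ≤ w (φ e)` for all `e ∈ E(T)`. -/
theorem stmt_1 {V E : Type*} [Fintype V] [Fintype E] [DecidableEq E]
    (ends : E → Sym2 V) (w : E → ℚ) (hw : ∀ e, 0 ≤ w e)
    (hconn : EdgeConn ends (Set.univ : Set E))
    (T T' : Finset E)
    (hT : IsSpanningTree ends T)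
    (hmin : ∀ S : Finset E, IsSpanningTree ends S → ∑ e ∈ T, w e ≤ ∑ e ∈ S, w e)
    (hT' : IsSpanningTree ends T') :
    ∃ φ : E → E, Set.BijOn φ ↑T ↑T' ∧
      (∀ e ∈ T, IsSpanningTree ends (insert (φ e) (T.erase e))) ∧
      (∀ e ∈ T, w e ≤ w (φ e)) := by
  classical
  by_cases hV : Nonempty V
  case neg =>
    haveI hE : IsEmpty E :=
      ⟨fun e => (sym2_cases (ends e)).elim fun a _ => hV ⟨a⟩⟩
    have hT0 : T = ∅ := Finset.eq_empty_of_forall_notMem fun e _ => hE.false e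
    have hT'0 : T' = ∅ := Finset.eq_empty_of_forall_notMem fun e _ => hE.false e
    refine ⟨id, ?_, ?_, ?_⟩
    · rw [hT0, hT'0]; simpa using Set.bijOn_empty id
    · intro e he; exact absurd he (by simp [hT0])
    · intro e he; exact absurd he (by simp [hT0])
  haveI := hV
  -- the crossing relation
  set Cross : E → E → Prop :=
    fun e f => ∃ c d, ends f = s(c, d) ∧ ¬ Conn ends (T.erase e) c d with hCross
  set t : {e // e ∈ T} → Finset E := fun e => T'.filter (Cross e.1) with hFt
  -- Hall's condition
  have hall : ∀ s : Finset {e // e ∈ T}, s.card ≤ (s.biUnion t).card := by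
    intro s
    set X : Finset E := s.image Subtype.val with hX
    have hXcard : X.card = s.card := Finset.card_image_of_injective s Subtype.val_injective
    have hXT : X ⊆ T := by
      intro e he; obtain ⟨⟨e', he'⟩, -, rfl⟩ := Finset.mem_image.mp he; exact he'
    set N : Finset E := s.biUnion t with hN
    -- every edge of T' has endpoints connected in (T \ X) ∪ N
    have hedge : ∀ f ∈ T', ∀ c d : V, ends f = s(c, d) →
        Conn ends ((T \ X) ∪ N) c d := by
      intro f hf c d hcd
      by_cases hfN : f ∈ N
      · exact Relation.ReflTransGen.single ⟨f, Finset.mem_union_right _ hfN, hcd⟩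
      · have hnc : ∀ e ∈ X, Conn ends (T.erase e) c d := by
          intro e he
          by_contra hnc
          apply hfN
          obtain ⟨⟨e', he'⟩, hes, rfl⟩ := Finset.mem_image.mp he
          exact Finset.mem_biUnion.mpr
            ⟨⟨e', he'⟩, hes, Finset.mem_filter.mpr ⟨hf, c, d, hcd, hnc⟩⟩
        exact conn_mono Finset.subset_union_left (conn_sdiff hT X hXT hnc)
    have hconn2 : ∀ x y : V, Conn ends ((T \ X) ∪ N) x y := by
      intro x y
      refine conn_replace (fun p q hpq => ?_) ((edgeConn_iff ends).mp hT'.1 x y)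
      obtain ⟨f, hf, hends⟩ := hpq
      exact hedge f hf p q hends
    have h1 := card_V_le (ends := ends) ((T \ X) ∪ N)
    have hc1 : cc ends ((T \ X) ∪ N) = 1 := cc_eq_one hconn2
    have h2 : ((T \ X) ∪ N).card ≤ (T \ X).card + N.card := Finset.card_union_le _ _
    have h3 : (T \ X).card = T.card - X.card := Finset.card_sdiff_of_subset hXT
    have h4 : X.card ≤ T.card := Finset.card_le_card hXT
    have h5 := tree_card hT
    omega
  obtain ⟨f0, hf0inj, hf0mem⟩ :=
    (Finset.all_card_le_biUnion_card_iff_exists_injective t).mp hall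
  set φ : E → E := fun e => if h : e ∈ T then f0 ⟨e, h⟩ else e with hφ
  have hφT : ∀ e (he : e ∈ T), φ e = f0 ⟨e, he⟩ := fun e he => dif_pos he
  have hmem : ∀ e (he : e ∈ T), φ e ∈ T' ∧ Cross e (φ e) := by
    intro e he
    rw [hφT e he]
    exact Finset.mem_filter.mp (hf0mem ⟨e, he⟩)
  -- exchange property
  have hexch : ∀ e (he : e ∈ T), φ e ∉ T.erase e ∧
      IsSpanningTree ends (insert (φ e) (T.erase e)) := by
    intro e he
    obtain ⟨c, d, hcd, hnc⟩ := (hmem e he).2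
    exact exchange_tree hT he hcd hnc
  have hT'card : T.card = T'.card := by
    have := tree_card hT; have := tree_card hT'; omega
  have hmaps : Set.MapsTo φ ↑T ↑T' := fun e he => (hmem e he).1
  have hinj : Set.InjOn φ ↑T := by
    intro e1 h1 e2 h2 heq
    rw [hφT e1 h1, hφT e2 h2] at heq
    exact congrArg Subtype.val (hf0inj heq)
  have himg : T.image φ = T' := by
    apply Finset.eq_of_subset_of_card_le
    · intro x hx
      obtain ⟨e, he, rfl⟩ := Finset.mem_image.mp hx
      exact (hmem e he).1
    · rw [Finset.card_image_of_injOn (by simpa using hinj)]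
      omega
  have hsurj : Set.SurjOn φ ↑T ↑T' := by
    intro x hx
    have : x ∈ T.image φ := himg ▸ hx
    obtain ⟨e, he, rfl⟩ := Finset.mem_image.mp this
    exact ⟨e, he, rfl⟩
  refine ⟨φ, ⟨hmaps, hinj, hsurj⟩, fun e he => (hexch e he).2, ?_⟩
  intro e he
  have htree := (hexch e he).2
  have hnm := (hexch e he).1
  have hsum := hmin _ htree
  rw [Finset.sum_insert hnm, Finset.sum_erase_eq_sub he] at hsum
  linarith
end

section
/- Let G be a connected graph with edge weights w and safe-edge set F̄; define w_α as the weight function scaling safe edges by α ∈ [0,1]. If a safe edge e is contained in some α-minimum spanning tree, then for every α' with 0 ≤ α' ≤ α, there is some α'-minimum spanning tree containing e. -/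
/-- The weight function `w_α` scaling the weight of safe edges by `α`. -/
def scaledW {E : Type*} [DecidableEq E] (w : E → ℝ) (safe : Finset E) (α : ℝ) : E → ℝ :=
  fun e => if e ∈ safe then α * w e else w e

/-- `T` is an `α`-minimum spanning tree (minimal total weight w.r.t. `w_α`). -/
def IsAlphaMST {V E : Type*} [Fintype E] [DecidableEq E] (ends : E → Sym2 V)
    (w : E → ℝ) (safe : Finset E) (α : ℝ) (T : Finset E) : Prop :=
  IsSpanningTree ends T ∧
    ∀ T' : Finset E, IsSpanningTree ends T' →
      ∑ e ∈ T, scaledW w safe α e ≤ ∑ e ∈ T', scaledW w safe α e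

section aux
variable {V E : Type*} [DecidableEq E] {ends : E → Sym2 V}

/-- Reachability using edges in `S`. -/
def Rk (ends : E → Sym2 V) (S : Set E) : V → V → Prop :=
  Relation.ReflTransGen (fun x y => ∃ e ∈ S, ends e = s(x, y))

lemma sym2_rep (z : Sym2 V) : ∃ p q : V, z = s(p, q) :=
  Sym2.exists.mp ⟨z, rfl⟩

lemma Rk.symm {S : Set E} {a b : V} (h : Rk ends S a b) : Rk ends S b a := by
  refine @Std.Symm.symm _ _ (@Relation.ReflTransGen.stdSymm _ _ ⟨?_⟩) _ _ h
  rintro p q ⟨e, heS, hpq⟩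
  exact ⟨e, heS, hpq.trans Sym2.eq_swap⟩

lemma Rk.mono {S S' : Set E} (hss : S ⊆ S') {a b : V} (h : Rk ends S a b) :
    Rk ends S' a b :=
  Relation.ReflTransGen.mono (fun x y ⟨e, heS, hpq⟩ => ⟨e, hss heS, hpq⟩) _ _ h

lemma Rk.single {S : Set E} {e : E} {x y : V} (heS : e ∈ S) (hxy : ends e = s(x, y)) :
    Rk ends S x y :=
  Relation.ReflTransGen.single ⟨e, heS, hxy⟩

/-- Replacing uses of edge `e` by a path from `u` to `v`. -/
lemma Rk.replace {S : Set E} {e : E} {u v a b : V} (he : ends e = s(u, v))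
    (huv : Rk ends S u v) (h : Rk ends (insert e S) a b) : Rk ends S a b := by
  induction h with
  | refl => exact .refl
  | tail h1 h2 ih =>
    obtain ⟨e', he', hee⟩ := h2
    rcases Set.mem_insert_iff.mp he' with rfl | hmem
    · rw [he] at hee
      rcases Sym2.eq_iff.mp hee with ⟨h3, h4⟩ | ⟨h3, h4⟩
      · exact ih.trans (h3 ▸ h4 ▸ huv)
      · exact ih.trans (h3 ▸ h4 ▸ huv.symm)
    · exact ih.tail ⟨e', hmem, hee⟩

/-- Decomposing a walk in `insert f S` according to whether it uses `f`. -/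
lemma Rk.decomp {S : Set E} {f : E} {x y a b : V} (hf : ends f = s(x, y))
    (h : Rk ends (insert f S) a b) :
    Rk ends S a b ∨ (Rk ends S a x ∧ Rk ends S y b) ∨ (Rk ends S a y ∧ Rk ends S x b) := by
  induction h with
  | refl => exact Or.inl .refl
  | @tail c d h1 h2 ih =>
    obtain ⟨e', he', hee⟩ := h2
    rcases Set.mem_insert_iff.mp he' with rfl | hmem
    · rw [hf] at hee
      rcases Sym2.eq_iff.mp hee with ⟨h3, h4⟩ | ⟨h3, h4⟩
      · subst h3; subst h4
        rcases ih with h | ⟨ha, _⟩ | ⟨ha, _⟩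
        · exact Or.inr (Or.inl ⟨h, .refl⟩)
        · exact Or.inr (Or.inl ⟨ha, .refl⟩)
        · exact Or.inl ha
      · subst h3; subst h4
        rcases ih with h | ⟨ha, _⟩ | ⟨ha, _⟩
        · exact Or.inr (Or.inr ⟨h, .refl⟩)
        · exact Or.inl ha
        · exact Or.inr (Or.inr ⟨ha, .refl⟩)
    · rcases ih with h | ⟨ha, hb⟩ | ⟨ha, hb⟩
      · exact Or.inl (h.tail ⟨e', hmem, hee⟩)
      · exact Or.inr (Or.inl ⟨ha, hb.tail ⟨e', hmem, hee⟩⟩)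
      · exact Or.inr (Or.inr ⟨ha, hb.tail ⟨e', hmem, hee⟩⟩)

/-- A walk leaving a set `A` uses an edge crossing `A`. -/
lemma Rk.cross {S : Set E} {A : Set V} {a b : V} (h : Rk ends S a b) (ha : a ∈ A) :
    b ∉ A → ∃ f ∈ S, ∃ x y, ends f = s(x, y) ∧ x ∈ A ∧ y ∉ A := by
  induction h with
  | refl => exact fun hb => absurd ha hb
  | @tail c d h1 h2 ih =>
    intro hd
    obtain ⟨e', he', hee⟩ := h2
    by_cases hc : c ∈ A
    · exact ⟨e', he', c, d, hee, hc, hd⟩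
    · exact ih hc

/-- A minimal connecting subset. -/
lemma exists_minimal_conn (ends : E → Sym2 V) (u v : V) (C : Finset E)
    (h : Rk ends ↑C u v) :
    ∃ D, D ⊆ C ∧ Rk ends ↑D u v ∧ ∀ f ∈ D, ¬ Rk ends ↑(D.erase f) u v := by
  induction C using Finset.strongInduction with
  | _ C ih =>
    by_cases hall : ∀ f ∈ C, ¬ Rk ends ↑(C.erase f) u v
    · exact ⟨C, le_refl _, h, hall⟩
    · push_neg at hall
      obtain ⟨f, hf, hrf⟩ := hall
      obtain ⟨D, hD, h1, h2⟩ := ih (C.erase f) (Finset.erase_ssubset hf) hrf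
      exact ⟨D, hD.trans (Finset.erase_subset f C), h1, h2⟩

/-- In a spanning tree, the endpoints of an edge are disconnected after removing it. -/
lemma tree_not_conn {T : Finset E} (hT : IsSpanningTree ends T) {g : E} (hg : g ∈ T)
    {p q : V} (hpq : ends g = s(p, q)) : ¬ Rk ends ↑(T.erase g) p q := by
  intro h
  apply hT.2 g hg
  intro a b
  have hab : Rk ends ↑T a b := hT.1 a b
  have hTe : (↑T : Set E) = insert g ↑(T.erase g) := by
    rw [← Finset.coe_insert, Finset.insert_erase hg]
  rw [hTe] at hab
  exact Rk.replace hpq h hab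

/-- The edge-swap lemma: exchanging `e` for a crossing edge `f` preserves spanning trees. -/
lemma swap_tree {T : Finset E} (hT : IsSpanningTree ends T)
    {e f : E} (he : e ∈ T) (hf : f ∉ T)
    {u v x y : V} (heuv : ends e = s(u, v)) (hfxy : ends f = s(x, y))
    (hxu : Rk ends ↑(T.erase e) x u) (hyv : Rk ends ↑(T.erase e) y v) :
    IsSpanningTree ends (insert f (T.erase e)) := by
  set S : Set E := ↑(T.erase e) with hS
  have hfS : f ∉ T.erase e := fun h => hf (Finset.mem_of_mem_erase h)
  have hEuv : ¬ Rk ends S u v := tree_not_conn hT he heuv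
  have hcoe : (↑(insert f (T.erase e)) : Set E) = insert f S := Finset.coe_insert _ _
  have hTS : (↑T : Set E) = insert e S := by
    rw [hS, ← Finset.coe_insert, Finset.insert_erase he]
  have hfmem : f ∈ (insert f S : Set E) := Set.mem_insert _ _
  have hsub : S ⊆ insert f S := Set.subset_insert _ _
  have huvT2 : Rk ends (insert f S) u v :=
    (hxu.symm.mono hsub).trans ((Rk.single hfmem hfxy).trans (hyv.mono hsub))
  constructor
  · rw [hcoe]
    intro a b
    have hab : Rk ends ↑T a b := hT.1 a b
    rw [hTS] at hab
    rcases Rk.decomp heuv hab with h | ⟨h1, h2⟩ | ⟨h1, h2⟩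
    · exact h.mono hsub
    · exact ((h1.mono hsub).trans huvT2).trans (h2.mono hsub)
    · exact ((h1.mono hsub).trans huvT2.symm).trans (h2.mono hsub)
  · intro g hg
    rcases Finset.mem_insert.mp hg with rfl | hgS
    · rw [Finset.erase_insert hfS]
      intro hcon
      exact hEuv (hcon u v)
    · have hgT : g ∈ T := Finset.mem_of_mem_erase hgS
      have hgf : g ≠ f := fun h => hfS (h ▸ hgS)
      obtain ⟨p, q, hpq⟩ := sym2_rep (ends g)
      have hpq' : ¬ Rk ends ↑(T.erase g) p q := tree_not_conn hT hgT hpq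
      rw [Finset.erase_insert_of_ne hgf.symm]
      intro hcon
      set S' : Set E := ↑((T.erase e).erase g) with hS'
      have hcoe2 : (↑(insert f ((T.erase e).erase g)) : Set E) = insert f S' :=
        Finset.coe_insert _ _
      have hpq2 : Rk ends (insert f S') p q := by
        have := hcon p q
        rwa [hcoe2] at this
      have hsub1 : S' ⊆ (↑(T.erase g) : Set E) :=
        Finset.coe_subset.mpr (Finset.erase_subset_erase g (Finset.erase_subset e T))
      have hpqS' : ¬ Rk ends S' p q := fun h => hpq' (h.mono hsub1)
      have hsub2 : S' ⊆ S := Finset.coe_subset.mpr (Finset.erase_subset g (T.erase e))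
      have hgstep : Rk ends S p q := Rk.single (Finset.mem_coe.mpr hgS) hpq
      rcases Rk.decomp hfxy hpq2 with h | ⟨h1, h2⟩ | ⟨h1, h2⟩
      · exact hpqS' h
      · exact hEuv ((Rk.symm ((h1.mono hsub2).trans hxu)).trans
          (hgstep.trans ((Rk.symm (h2.mono hsub2)).trans hyv)))
      · exact hEuv (((Rk.symm hxu).trans (h2.mono hsub2)).trans
          ((Rk.symm hgstep).trans ((h1.mono hsub2).trans hyv)))

end aux

/-- If a safe edge `e` lies in some `α`-MST, then for every `α'` with `0 ≤ α' ≤ α`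
some `α'`-MST contains `e`. -/
theorem stmt_3 {V E : Type*} [Fintype V] [Fintype E] [DecidableEq E]
    (ends : E → Sym2 V) (w : E → ℝ) (hw : ∀ e, 0 ≤ w e) (safe : Finset E)
    (hconn : EdgeConn ends (Set.univ : Set E))
    (α α' : ℝ) (hα' : 0 ≤ α') (hα'α : α' ≤ α) (hα : α ≤ 1)
    (e : E) (he : e ∈ safe)
    (T : Finset E) (hT : IsAlphaMST ends w safe α T) (heT : e ∈ T) :
    ∃ T' : Finset E, IsAlphaMST ends w safe α' T' ∧ e ∈ T' := by
  classical
  -- choose an α'-minimum spanning tree T'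
  have hne : (Finset.univ.filter fun T'' : Finset E => IsSpanningTree ends T'').Nonempty :=
    ⟨T, by simp [hT.1]⟩
  obtain ⟨T', hT'mem, hT'min⟩ :=
    Finset.exists_min_image _ (fun T'' : Finset E => ∑ g ∈ T'', scaledW w safe α' g) hne
  have hT'tree : IsSpanningTree ends T' := (Finset.mem_filter.mp hT'mem).2
  have hT'min' : ∀ T'' : Finset E, IsSpanningTree ends T'' →
      ∑ g ∈ T', scaledW w safe α' g ≤ ∑ g ∈ T'', scaledW w safe α' g := by
    intro T'' h
    exact hT'min T'' (Finset.mem_filter.mpr ⟨Finset.mem_univ _, h⟩)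
  by_cases heT' : e ∈ T'
  · exact ⟨T', ⟨hT'tree, hT'min'⟩, heT'⟩
  -- exchange argument
  obtain ⟨u, v, heuv⟩ := sym2_rep (ends e)
  set S : Set E := (↑(T.erase e) : Set E) with hSdef
  have hEuv : ¬ Rk ends S u v := tree_not_conn hT.1 heT heuv
  -- the component A of u in T \ e
  set A : Set V := {z | Rk ends S u z} with hA
  have huA : u ∈ A := Relation.ReflTransGen.refl
  have hvA : v ∉ A := hEuv
  -- minimal connecting subset of T' from u to v
  have huvT' : Rk ends ↑T' u v := hT'tree.1 u v
  obtain ⟨D, hDT', hDuv, hDmin⟩ := exists_minimal_conn ends u v T' huvT'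
  obtain ⟨f, hfD, x, y, hfxy, hxA, hyA⟩ := Rk.cross hDuv huA hvA
  have hfD' : f ∈ D := hfD
  have hfT' : f ∈ T' := hDT' hfD'
  have hfe : f ≠ e := fun h => heT' (h ▸ hfT')
  have hfT : f ∉ T := by
    intro hfT
    have hfS : f ∈ S := Finset.mem_coe.mpr (Finset.mem_erase.mpr ⟨hfe, hfT⟩)
    exact hyA (hxA.tail ⟨f, hfS, hfxy⟩)
  have hxu : Rk ends S x u := Rk.symm hxA
  have hyv : Rk ends S y v := by
    have hyvT : Rk ends ↑T y v := hT.1.1 y v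
    have hTS : (↑T : Set E) = insert e S := by
      rw [hSdef, ← Finset.coe_insert, Finset.insert_erase heT]
    rw [hTS] at hyvT
    rcases Rk.decomp heuv hyvT with h | ⟨h1, h2⟩ | ⟨h1, h2⟩
    · exact h
    · exact absurd h1.symm hyA
    · exact h1
  -- T₂ := T - e + f is a spanning tree
  have hT2 : IsSpanningTree ends (insert f (T.erase e)) :=
    swap_tree hT.1 heT hfT heuv hfxy hxu hyv
  -- weight inequality at α : scaledW α e ≤ scaledW α f
  have hfTe : f ∉ T.erase e := fun h => hfT (Finset.mem_of_mem_erase h)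
  have hsum2 : ∑ g ∈ insert f (T.erase e), scaledW w safe α g
      = scaledW w safe α f + ∑ g ∈ T.erase e, scaledW w safe α g :=
    Finset.sum_insert hfTe
  have hsumT : ∑ g ∈ T, scaledW w safe α g
      = scaledW w safe α e + ∑ g ∈ T.erase e, scaledW w safe α g :=
    (Finset.add_sum_erase T _ heT).symm
  have hef : scaledW w safe α e ≤ scaledW w safe α f := by
    have := hT.2 _ hT2
    rw [hsum2, hsumT] at this
    linarith
  -- weight inequality at α'
  have hef' : scaledW w safe α' e ≤ scaledW w safe α' f := by
    have hα0 : 0 ≤ α := le_trans hα' hα'α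
    simp only [scaledW, he, if_true] at hef ⊢
    by_cases hfsafe : f ∈ safe
    · simp only [hfsafe, if_true] at hef ⊢
      rcases le_or_gt (w e) (w f) with h | h
      · exact mul_le_mul_of_nonneg_left h hα'
      · have hα0' : α = 0 := by nlinarith
        have : α' = 0 := le_antisymm (hα0' ▸ hα'α) hα'
        simp [this]
    · simp only [hfsafe, if_false] at hef ⊢
      calc α' * w e ≤ α * w e := mul_le_mul_of_nonneg_right hα'α (hw e)
        _ ≤ w f := hef
  -- T₃ := T' - f + e is a spanning tree containing e
  have hnfDuv : ¬ Rk ends ↑(D.erase f) u v := hDmin f hfD'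
  have hDf : (↑D : Set E) = insert f ↑(D.erase f) := by
    rw [← Finset.coe_insert, Finset.insert_erase hfD']
  have hDsub : (↑(D.erase f) : Set E) ⊆ ↑(T'.erase f) :=
    Finset.coe_subset.mpr (Finset.erase_subset_erase f hDT')
  have hT3 : IsSpanningTree ends (insert e (T'.erase f)) := by
    rw [hDf] at hDuv
    rcases Rk.decomp hfxy hDuv with h | ⟨h1, h2⟩ | ⟨h1, h2⟩
    · exact absurd h hnfDuv
    · -- Rk (D\f) u x and Rk (D\f) y v
      exact swap_tree hT'tree hfT' heT' hfxy heuv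
        (h1.mono hDsub) ((h2.mono hDsub).symm)
    · -- Rk (D\f) u y and Rk (D\f) x v
      exact swap_tree hT'tree hfT' heT' (hfxy.trans Sym2.eq_swap) heuv
        (h1.mono hDsub) ((h2.mono hDsub).symm)
  -- T₃ is an α'-MST
  have heT'f : e ∉ T'.erase f := fun h => heT' (Finset.mem_of_mem_erase h)
  have hsum3 : ∑ g ∈ insert e (T'.erase f), scaledW w safe α' g
      = scaledW w safe α' e + ∑ g ∈ T'.erase f, scaledW w safe α' g :=
    Finset.sum_insert heT'f
  have hsumT' : ∑ g ∈ T', scaledW w safe α' g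
      = scaledW w safe α' f + ∑ g ∈ T'.erase f, scaledW w safe α' g :=
    (Finset.add_sum_erase T' _ hfT').symm
  refine ⟨insert e (T'.erase f), ⟨hT3, ?_⟩, Finset.mem_insert_self _ _⟩
  intro T'' hT''
  have h1 : ∑ g ∈ insert e (T'.erase f), scaledW w safe α' g
      ≤ ∑ g ∈ T', scaledW w safe α' g := by
    rw [hsum3, hsumT']
    linarith
  exact h1.trans (hT'min' T'' hT'')
end

section
/- Let H be a subgraph of a graph G such that (V(G), E(H)) is connected and H − f is connected for every unsafe edge f ∈ E(H). Then contracting all safe edges of H yields a 2-edge-connected graph. More generally, if H is a spanning subgraph of G such that H − F' is connected for every set F' of at most k unsafe edges, then H with all safe edges contracted is (k+1)-edge-connected. -/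
open scoped Classical in
/-- If `H` is a spanning subgraph such that `H - F'` is connected for every set `F'` of at
most `k` unsafe edges (for `k = 1`: `(V, E(H))` is connected and `H - f` is connected for
every unsafe `f ∈ E(H)`), then contracting all safe edges of `H` yields a
`(k+1)`-edge-connected graph: in the contracted graph (vertices are the classes of the
equivalence generated by the safe edges of `H`, edges are the unsafe edges of `H`),
removing any at most `k` edges leaves it connected. -/
theorem stmt_6 {V E : Type*} [Fintype V] [Fintype E] [DecidableEq E]
    (ends : E → Sym2 V) (safe : Finset E) (k : ℕ) (H : Finset E)
    (hspan : EdgeConn ends ↑H)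
    (hfeas : ∀ F' : Finset E, F' ⊆ H → (∀ f ∈ F', f ∉ safe) → F'.card ≤ k →
      EdgeConn ends ↑(H \ F')) :
    let s : Setoid V := Relation.EqvGen.setoid (fun x y => ∃ e ∈ H ∩ safe, ends e = s(x, y))
    let ends' : E → Sym2 (Quotient s) := fun e => (ends e).map (Quotient.mk s)
    let unsafeH : Finset E := H.filter (fun e => e ∉ safe)
    ∀ F' : Finset E, F' ⊆ unsafeH → F'.card ≤ k →
      EdgeConn ends' ↑(unsafeH \ F') := by
  intro s ends' unsafeH F' hF' hcard
  have hF'H : F' ⊆ H := fun f hf => (Finset.mem_filter.1 (hF' hf)).1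
  have hF'unsafe : ∀ f ∈ F', f ∉ safe := fun f hf => (Finset.mem_filter.1 (hF' hf)).2
  have hconn := hfeas F' hF'H hF'unsafe hcard
  intro a b
  obtain ⟨x, rfl⟩ := Quotient.exists_rep a
  obtain ⟨y, rfl⟩ := Quotient.exists_rep b
  have h := hconn x y
  induction h with
  | refl => exact Relation.ReflTransGen.refl
  | @tail c d _ hstep ih =>
    obtain ⟨e, he, hends⟩ := hstep
    rw [Finset.mem_coe, Finset.mem_sdiff] at he
    by_cases hs : e ∈ safe
    · have hq : (Quotient.mk s c : Quotient s) = Quotient.mk s d :=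
        Quotient.sound (Relation.EqvGen.rel _ _ ⟨e, Finset.mem_inter.2 ⟨he.1, hs⟩, hends⟩)
      rwa [← hq]
    · refine Relation.ReflTransGen.tail ih ⟨e, ?_, ?_⟩
      · rw [Finset.mem_coe, Finset.mem_sdiff]
        exact ⟨Finset.mem_filter.2 ⟨he.1, hs⟩, he.2⟩
      · show (ends e).map (Quotient.mk s) = _
        rw [hends, Sym2.map_pair_eq]
end

section
/- Fix λ ≥ 1. The maximum over α ∈ [0,1] of the function λ·(1 + α·β(α)) subject to β(α)·(1 + α·(λ − 1 + λα)) = 1, i.e., the maximum of g(α) = λ·(1 + α/(1 + α(λ−1) + λα²)) over α ∈ [0,1], is attained at α = 1/√λ and equals λ(λ + 2√λ)/(2√λ + λ − 1). -/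
/-- The maximum over `α ∈ [0,1]` of `g α = λ·(1 + α/(1 + α(λ-1) + λα²))`
(equivalently of `λ·(1 + α·β)` subject to `β·(1 + α(λ - 1 + λα)) = 1`)
is attained at `α = 1/√λ` and equals `λ(λ + 2√λ)/(2√λ + λ - 1)`, for any fixed `λ ≥ 1`. -/
theorem stmt_8 (lam : ℝ) (hlam : 1 ≤ lam) :
    let g : ℝ → ℝ := fun a => lam * (1 + a / (1 + a * (lam - 1) + lam * a ^ 2))
    (1 / Real.sqrt lam ∈ Set.Icc (0:ℝ) 1) ∧
    (∀ a ∈ Set.Icc (0:ℝ) 1, g a ≤ g (1 / Real.sqrt lam)) ∧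
    g (1 / Real.sqrt lam) = lam * (lam + 2 * Real.sqrt lam) / (2 * Real.sqrt lam + lam - 1) := by
  intro g
  set s := Real.sqrt lam with hsdef
  have hs1 : 1 ≤ s := by
    rw [hsdef, show (1:ℝ) = Real.sqrt 1 by simp]
    exact Real.sqrt_le_sqrt hlam
  have hs0 : 0 < s := lt_of_lt_of_le one_pos hs1
  have hs2 : s ^ 2 = lam := Real.sq_sqrt (by linarith)
  have hlam0 : 0 < lam := by linarith
  have hmem : 1 / s ∈ Set.Icc (0:ℝ) 1 := by
    constructor
    · positivity
    · rw [div_le_one hs0]; linarith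
  -- value at 1/s
  have hDs : 1 + (1/s) * (lam - 1) + lam * (1/s) ^ 2 = (2 * s + lam - 1) / s := by
    field_simp
    nlinarith [hs2]
  have hden0 : (0:ℝ) < 2 * s + lam - 1 := by linarith
  have hval : g (1/s) = lam * (1 + 1 / (2 * s + lam - 1)) := by
    show lam * (1 + (1/s) / (1 + (1/s) * (lam - 1) + lam * (1/s) ^ 2)) = _
    rw [hDs]
    field_simp
  refine ⟨hmem, ?_, ?_⟩
  · intro a ha
    obtain ⟨ha0, ha1⟩ := ha
    have hD : (0:ℝ) < 1 + a * (lam - 1) + lam * a ^ 2 := by nlinarith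
    have key : a / (1 + a * (lam - 1) + lam * a ^ 2) ≤ 1 / (2 * s + lam - 1) := by
      rw [div_le_div_iff₀ hD hden0]
      nlinarith [sq_nonneg (s * a - 1)]
    rw [hval]
    have : (1:ℝ) + a / (1 + a * (lam - 1) + lam * a ^ 2) ≤ 1 + 1 / (2 * s + lam - 1) := by
      linarith
    exact mul_le_mul_of_nonneg_left this (le_of_lt hlam0)
  · rw [hval]
    rw [mul_div_assoc]
    congr 1
    rw [eq_div_iff (ne_of_gt hden0)]
    field_simp
    ring
end

section
/- In the optimization problem maximize λ(1 + Σ_{j=1}^N α_j β_j) subject to Σ_{j=1}^N β_j(1 + α_j(λ − 1 + λα_j)) = 1, with 0 ≤ α_1 ≤ ⋯ ≤ α_N ≤ 1 and β_j ∈ [0,1], there is an optimal solution in which at most one β_k is nonzero; consequently the optimal value is independent of N and equals max over α ∈ [0,1] of λ(1 + α/(1 + α(λ − 1 + λα))). -/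
/-- In the problem of maximizing `λ(1 + Σ_j α_j β_j)` subject to
`Σ_j β_j (1 + α_j(λ - 1 + λ α_j)) = 1`, `0 ≤ α_1 ≤ ⋯ ≤ α_N ≤ 1`, `β_j ∈ [0,1]`:
any feasible point is dominated by a feasible point in which at most one `β_k`
is nonzero (with the same `α`'s), and consequently the objective value is bounded by
the (N-independent) single-variable maximum `sup_{a ∈ [0,1]} λ(1 + a/(1 + a(λ-1+λa)))`. -/
theorem stmt_10 (lam : ℝ) (hlam : 1 ≤ lam) (N : ℕ) (hN : 0 < N)
    (α β : Fin N → ℝ)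
    (hα : ∀ j, α j ∈ Set.Icc (0:ℝ) 1) (hmono : Monotone α)
    (hβ : ∀ j, β j ∈ Set.Icc (0:ℝ) 1)
    (hcon : ∑ j, β j * (1 + α j * (lam - 1 + lam * α j)) = 1) :
    (∃ k : Fin N, ∃ β' : Fin N → ℝ, (∀ j, β' j ∈ Set.Icc (0:ℝ) 1) ∧
      (∀ j, j ≠ k → β' j = 0) ∧
      (∑ j, β' j * (1 + α j * (lam - 1 + lam * α j)) = 1) ∧
      lam * (1 + ∑ j, α j * β j) ≤ lam * (1 + ∑ j, α j * β' j)) ∧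
    lam * (1 + ∑ j, α j * β j) ≤
      ⨆ a ∈ Set.Icc (0:ℝ) 1, lam * (1 + a / (1 + a * (lam - 1 + lam * a))) := by
  set w : Fin N → ℝ := fun j => 1 + α j * (lam - 1 + lam * α j) with hw
  have hw1 : ∀ j, 1 ≤ w j := by
    intro j
    have h0 := (hα j).1
    have h1 : 0 ≤ lam - 1 + lam * α j := by nlinarith
    have : 0 ≤ α j * (lam - 1 + lam * α j) := mul_nonneg h0 h1
    simp only [hw]; linarith
  have hwpos : ∀ j, 0 < w j := fun j => lt_of_lt_of_le one_pos (hw1 j)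
  have hlampos : 0 < lam := lt_of_lt_of_le one_pos hlam
  -- choose k maximizing α j / w j
  obtain ⟨k, -, hk⟩ := Finset.exists_max_image Finset.univ (fun j => α j / w j)
    (Finset.univ_nonempty_iff.2 (Fin.pos_iff_nonempty.1 hN))
  have hk' : ∀ j, α j / w j ≤ α k / w k := fun j => hk j (Finset.mem_univ j)
  -- the key bound: Σ α j β j ≤ α k / w k
  have hkey : ∑ j, α j * β j ≤ α k / w k := by
    calc ∑ j, α j * β j ≤ ∑ j, (α k / w k) * (β j * w j) := by
          apply Finset.sum_le_sum
          intro j _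
          have hbw : 0 ≤ β j * w j := mul_nonneg (hβ j).1 (le_of_lt (hwpos j))
          have hne : w j ≠ 0 := ne_of_gt (hwpos j)
          have : α j * β j = (α j / w j) * (β j * w j) := by
            rw [mul_comm (β j) (w j), ← mul_assoc, div_mul_cancel₀ _ hne]
          rw [this]
          exact mul_le_mul_of_nonneg_right (hk' j) hbw
      _ = (α k / w k) * ∑ j, β j * w j := by rw [Finset.mul_sum]
      _ = α k / w k := by rw [hcon, mul_one]
  set β' : Fin N → ℝ := fun j => if j = k then 1 / w k else 0 with hβ'
  have hβ'mem : ∀ j, β' j ∈ Set.Icc (0:ℝ) 1 := by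
    intro j
    simp only [hβ']
    split
    · constructor
      · exact div_nonneg zero_le_one (le_of_lt (hwpos k))
      · rw [div_le_one (hwpos k)]; exact hw1 k
    · simp
  have hsum1 : ∑ j, β' j * w j = 1 := by
    rw [Finset.sum_eq_single k]
    · simp only [hβ', if_pos rfl]
      rw [one_div, inv_mul_cancel₀ (ne_of_gt (hwpos k))]
    · intro j _ hj; simp [hβ', hj]
    · intro h; exact absurd (Finset.mem_univ k) h
  have hsum2 : ∑ j, α j * β' j = α k / w k := by
    rw [Finset.sum_eq_single k]
    · simp only [hβ', if_pos rfl]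
      rw [mul_one_div]
    · intro j _ hj; simp [hβ', hj]
    · intro h; exact absurd (Finset.mem_univ k) h
  constructor
  · refine ⟨k, β', hβ'mem, fun j hj => by simp [hβ', hj], hsum1, ?_⟩
    rw [hsum2]
    have := hkey
    nlinarith
  · -- bound by sup
    have hval : lam * (1 + ∑ j, α j * β j) ≤
        lam * (1 + α k / (1 + α k * (lam - 1 + lam * α k))) := by
      have : w k = 1 + α k * (lam - 1 + lam * α k) := rfl
      rw [← this]
      nlinarith
    refine hval.trans ?_
    have hbdd : BddAbove (Set.range fun a => ⨆ _ : a ∈ Set.Icc (0:ℝ) 1,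
        lam * (1 + a / (1 + a * (lam - 1 + lam * a)))) := by
      refine ⟨2 * lam, ?_⟩
      rintro x ⟨a, rfl⟩
      dsimp only
      by_cases ha : a ∈ Set.Icc (0:ℝ) 1
      · rw [ciSup_pos ha]
        have hden : 1 ≤ 1 + a * (lam - 1 + lam * a) := by
          have hp : 0 ≤ lam - 1 + lam * a := by nlinarith [ha.1]
          nlinarith [mul_nonneg ha.1 hp]
        have hdenpos : 0 < 1 + a * (lam - 1 + lam * a) := by linarith
        have : a / (1 + a * (lam - 1 + lam * a)) ≤ 1 := by
          rw [div_le_one hdenpos]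
          nlinarith [ha.1, ha.2]
        nlinarith
      · rw [ciSup_neg ha, Real.sSup_empty]
        positivity
    have hkmem : α k ∈ Set.Icc (0:ℝ) 1 := hα k
    calc lam * (1 + α k / (1 + α k * (lam - 1 + lam * α k)))
        ≤ ⨆ _ : α k ∈ Set.Icc (0:ℝ) 1,
            lam * (1 + α k / (1 + α k * (lam - 1 + lam * α k))) := by
          rw [ciSup_pos hkmem]
      _ ≤ ⨆ a ∈ Set.Icc (0:ℝ) 1, lam * (1 + a / (1 + a * (lam - 1 + lam * a))) :=
          le_ciSup hbdd (α k)
end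

section
/- Let τ ≥ 1, λ ≥ 1. Setting α = (−1 + √(1 + 4τ))/(2τ) and solving w_A = w_B where w_A(b₀, b_α) = λ + λ(α b₀ + b_α) and w_B(b₀, b_α) = (τ + α)b₀ + b_α + (τ + 1/α)(1 − b₀ − b_α), the maximum over b₀, b_α ∈ [0,1] with b₀ + b_α ≤ 1 of min(w_A, w_B) is at most λ(4τ² + √(1+4τ) − 2τ − 1)/((1 − λ)√(1+4τ) + 2τ² + (2λ − 2)τ − 1 + λ). In particular for τ = λ = 2 this bound equals 14/5. -/
/-- With `α = (-1 + √(1+4τ))/(2τ)`, for all `b₀, b_α ∈ [0,1]` with `b₀ + b_α ≤ 1`,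
the minimum of `w_A = λ + λ(α b₀ + b_α)` and
`w_B = (τ + α) b₀ + b_α + (τ + 1/α)(1 - b₀ - b_α)` is at most
`λ(4τ² + √(1+4τ) - 2τ - 1)/((1 - λ)√(1+4τ) + 2τ² + (2λ - 2)τ - 1 + λ)`;
in particular for `τ = λ = 2` this bound equals `14/5`. -/
theorem stmt_11 (τ lam : ℝ) (hτ : 1 ≤ τ) (hlam : 1 ≤ lam) :
    let α : ℝ := (-1 + Real.sqrt (1 + 4 * τ)) / (2 * τ)
    let bound : ℝ := lam * (4 * τ ^ 2 + Real.sqrt (1 + 4 * τ) - 2 * τ - 1) /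
      ((1 - lam) * Real.sqrt (1 + 4 * τ) + 2 * τ ^ 2 + (2 * lam - 2) * τ - 1 + lam)
    (∀ b0 bα : ℝ, b0 ∈ Set.Icc (0:ℝ) 1 → bα ∈ Set.Icc (0:ℝ) 1 → b0 + bα ≤ 1 →
      min (lam + lam * (α * b0 + bα))
          ((τ + α) * b0 + bα + (τ + 1 / α) * (1 - b0 - bα)) ≤ bound) ∧
    (τ = 2 → lam = 2 → bound = 14 / 5) := by
  intro α bound
  have hτ0 : (0:ℝ) < τ := by linarith
  have hlam0 : (0:ℝ) < lam := by linarith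
  set s : ℝ := Real.sqrt (1 + 4 * τ) with hs_def
  have hs2 : s ^ 2 = 1 + 4 * τ := Real.sq_sqrt (by linarith)
  have hs0 : (0:ℝ) ≤ s := Real.sqrt_nonneg _
  have hs1 : 2 < s := by nlinarith
  have hα : α = (-1 + s) / (2 * τ) := rfl
  have hboundd : bound = lam * (4 * τ ^ 2 + s - 2 * τ - 1) /
      ((1 - lam) * s + 2 * τ ^ 2 + (2 * lam - 2) * τ - 1 + lam) := rfl
  have hαpos : 0 < α := by
    rw [hα]; apply div_pos <;> linarith
  have h1α : 1 / α = (s + 1) / 2 := by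
    rw [hα, one_div_div, div_eq_div_iff (by linarith) (by norm_num : (2:ℝ) ≠ 0)]
    linear_combination -hs2
  have hD : 0 < 2 * τ + s + 2 * lam - 1 := by linarith
  have hslt : s < 2 * τ + 1 := by nlinarith
  have hDb : 0 < (1 - lam) * s + 2 * τ ^ 2 + (2 * lam - 2) * τ - 1 + lam := by
    nlinarith [mul_nonneg (sub_nonneg.2 hlam) (sub_nonneg.2 hslt.le)]
  have hB : bound = 2 * lam * (2 * τ + s) / (2 * τ + s + 2 * lam - 1) := by
    rw [hboundd, div_eq_div_iff hDb.ne' hD.ne']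
    linear_combination (2 * lam ^ 2 - lam) * hs2
  constructor
  · intro b0 bα hb0 hbα hsum
    rcases le_or_gt (lam + lam * (α * b0 + bα)) bound with h | h
    · exact le_trans (min_le_left _ _) h
    · refine le_trans (min_le_right _ _) ?_
      rw [hB] at h ⊢
      rw [div_lt_iff₀ hD] at h
      rw [le_div_iff₀ hD]
      have key : 2 * τ + s + 1 - 2 * lam < (α * b0 + bα) * (2 * τ + s + 2 * lam - 1) := by
        nlinarith [h, hlam0]
      have hwB : (τ + α) * b0 + bα + (τ + 1 / α) * (1 - b0 - bα)
          = (2 * τ + s + 1) / 2 + ((1 - 2 * τ - s) / 2) * (α * b0 + bα) := by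
        rw [h1α, hα]
        field_simp
        ring_nf
        linear_combination b0 * hs2
      rw [hwB]
      have hpos : 0 < s + 2 * τ - 1 := by linarith
      nlinarith [mul_pos hpos (sub_pos.2 key)]
  · intro ht hl
    subst ht hl
    have h9 : s = 3 := by
      rw [hs_def, show (1 + 4 * (2:ℝ)) = 3 ^ 2 by norm_num,
        Real.sqrt_sq (by norm_num : (0:ℝ) ≤ 3)]
    rw [hboundd, h9]; norm_num
end

section
/- Let G be a graph on 4 vertices consisting of a triangle of safe edges of weight 1 and a fourth vertex joined to each triangle vertex by an unsafe edge of weight 0. Then the LP relaxation of the cut formulation of FGC (each cut must have total value ≥ 2, where safe edges count twice) has optimal value at most 3/4, while every integral feasible FGC solution has weight at least 2; hence the integrality gap of this formulation is at least 8/3. -/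
lemma cross_of_conn {V E : Type*} (ends : E → Sym2 V) (T : Set E) (S : Set V) {a b : V}
    (h : Relation.ReflTransGen (fun x y => ∃ e ∈ T, ends e = s(x, y)) a b)
    (ha : a ∈ S) (hb : b ∉ S) :
    ∃ e ∈ T, ∃ x ∈ S, ∃ y ∉ S, ends e = s(x, y) := by
  induction h with
  | refl => exact absurd ha hb
  | @tail c d h step ih =>
    obtain ⟨e, he, hce⟩ := step
    by_cases hc : c ∈ S
    · exact ⟨e, he, c, hc, d, hb, hce⟩
    · exact ih hc

lemma crossIff {α : Type*} (S : Finset α) (a b : α) :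
    (∃ x ∈ S, ∃ y ∉ S, s(a, b) = s(x, y)) ↔ ((a ∈ S ∧ b ∉ S) ∨ (b ∈ S ∧ a ∉ S)) := by
  constructor
  · rintro ⟨x, hx, y, hy, hxy⟩
    rw [Sym2.eq_iff] at hxy
    rcases hxy with ⟨rfl, rfl⟩ | ⟨rfl, rfl⟩
    · exact Or.inl ⟨hx, hy⟩
    · exact Or.inr ⟨hx, hy⟩
  · rintro (⟨ha, hb⟩ | ⟨hb, ha⟩)
    · exact ⟨a, ha, b, hb, rfl⟩
    · exact ⟨b, hb, a, ha, Sym2.eq_swap⟩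

open scoped Classical in
/-- **Integrality gap instance.** For the graph on 4 vertices consisting of a triangle of
safe edges of weight 1 and a fourth vertex joined to each triangle vertex by an unsafe
edge of weight 0: the LP relaxation of the cut formulation of FGC (every cut has value
at least 2, safe edges counting twice) has a feasible solution of cost at most `3/4`,
while every integral feasible FGC solution has weight at least `2`
(hence the integrality gap is at least `8/3`). -/
theorem stmt_12 :
    let ends : Fin 6 → Sym2 (Fin 4) :=
      ![s(0, 1), s(0, 2), s(1, 2), s(0, 3), s(1, 3), s(2, 3)]
    let safe : Finset (Fin 6) := {0, 1, 2}
    let w : Fin 6 → ℝ := fun e => if e ∈ safe then 1 else 0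
    let crosses : Fin 6 → Finset (Fin 4) → Prop := fun e S => ∃ a ∈ S, ∃ b ∉ S, ends e = s(a, b)
    (∃ x : Fin 6 → ℝ, (∀ e, x e ∈ Set.Icc (0:ℝ) 1) ∧
      (∀ S : Finset (Fin 4), S.Nonempty → S ≠ Finset.univ →
        2 ≤ ∑ e ∈ Finset.univ.filter (fun e => crosses e S),
              (if e ∈ safe then 2 * x e else x e)) ∧
      ∑ e, w e * x e ≤ 3 / 4) ∧
    (∀ Z : Finset (Fin 6), (∀ f : Fin 6, f ∉ safe → EdgeConn ends ↑(Z.erase f)) →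
      2 ≤ ∑ e ∈ Z, w e) := by
  intro ends safe w crosses
  have m0 : ends 0 = s(0, 1) := rfl
  have m1 : ends 1 = s(0, 2) := rfl
  have m2 : ends 2 = s(1, 2) := rfl
  have m3 : ends 3 = s(0, 3) := rfl
  have m4 : ends 4 = s(1, 3) := rfl
  have m5 : ends 5 = s(2, 3) := rfl
  constructor
  · refine ⟨fun e => if e ∈ safe then 1/4 else 1, ?_, ?_, ?_⟩
    · intro e
      simp only [Set.mem_Icc]
      constructor <;> (beta_reduce; split <;> norm_num)
    · intro S hS hSu
      rw [Finset.sum_filter, Fin.sum_univ_six]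
      simp only [crosses, safe, m0, m1, m2, m3, m4, m5, crossIff]
      by_cases h0 : (0 : Fin 4) ∈ S <;> by_cases h1 : (1 : Fin 4) ∈ S <;>
        by_cases h2 : (2 : Fin 4) ∈ S <;> by_cases h3 : (3 : Fin 4) ∈ S
      all_goals first
        | (exfalso; apply hSu; apply Finset.eq_univ_iff_forall.mpr; intro v
           fin_cases v <;> assumption
           done)
        | (exfalso; obtain ⟨v, hv⟩ := hS; fin_cases v <;> simp_all; done)
        | (simp [h0, h1, h2, h3]; norm_num; done)
        | (simp [h0, h1, h2, h3]; done)
    · simp only [w, safe, Fin.sum_univ_six]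
      simp
      norm_num
  · intro Z hZ
    have two : ∀ i j : Fin 6, i ≠ j → i ∈ safe → j ∈ safe → i ∈ Z → j ∈ Z →
        (2:ℝ) ≤ ∑ e ∈ Z, w e := by
      intro i j hij hi hj hiZ hjZ
      have hsub : ({i, j} : Finset (Fin 6)) ⊆ Z := by
        intro k hk
        rcases Finset.mem_insert.mp hk with rfl | hk
        · exact hiZ
        · rw [Finset.mem_singleton.mp hk]; exact hjZ
      calc (2:ℝ) = ∑ e ∈ ({i, j} : Finset (Fin 6)), w e := by
            rw [Finset.sum_pair hij]; simp only [w, if_pos hi, if_pos hj]; norm_num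
        _ ≤ ∑ e ∈ Z, w e := by
            refine Finset.sum_le_sum_of_subset_of_nonneg hsub ?_
            intro k _ _
            simp only [w]; split <;> norm_num
    have d1 : (0:Fin 6) ∈ Z ∨ (1:Fin 6) ∈ Z := by
      have h3 := hZ 3 (by decide)
      obtain ⟨e, he, x, hx, y, hy, hce⟩ :=
        cross_of_conn ends _ {(0:Fin 4)} (h3 0 3) rfl (by simp)
      rw [Set.mem_singleton_iff] at hx
      subst hx
      rw [Finset.mem_coe, Finset.mem_erase] at he
      fin_cases e <;> simp_all [Sym2.eq_iff, Set.mem_singleton_iff]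
    have d2 : (0:Fin 6) ∈ Z ∨ (2:Fin 6) ∈ Z := by
      have h4 := hZ 4 (by decide)
      obtain ⟨e, he, x, hx, y, hy, hce⟩ :=
        cross_of_conn ends _ {(1:Fin 4)} (h4 1 3) rfl (by simp)
      rw [Set.mem_singleton_iff] at hx
      subst hx
      rw [Finset.mem_coe, Finset.mem_erase] at he
      fin_cases e <;> simp_all [Sym2.eq_iff, Set.mem_singleton_iff]
    have d3 : (1:Fin 6) ∈ Z ∨ (2:Fin 6) ∈ Z := by
      have h5 := hZ 5 (by decide)
      obtain ⟨e, he, x, hx, y, hy, hce⟩ :=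
        cross_of_conn ends _ {(2:Fin 4)} (h5 2 3) rfl (by simp)
      rw [Set.mem_singleton_iff] at hx
      subst hx
      rw [Finset.mem_coe, Finset.mem_erase] at he
      fin_cases e <;> simp_all [Sym2.eq_iff, Set.mem_singleton_iff]
    rcases d1 with h0 | h1
    · rcases d3 with h1 | h2
      · exact two 0 1 (by decide) (by decide) (by decide) h0 h1
      · exact two 0 2 (by decide) (by decide) (by decide) h0 h2
    · rcases d2 with h0 | h2
      · exact two 0 1 (by decide) (by decide) (by decide) h0 h1
      · exact two 1 2 (by decide) (by decide) (by decide) h1 h2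
end
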